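/- There do not exist smooth functions ν, C : ℝ³ → ℝ with ν nowhere vanishing such that the 1-form ω = y dx − x dy equals ν dC globally on ℝ³; i.e., there are no smooth ν, C on ℝ³ with ν(p) ≠ 0 for all p and ν·∂C/∂x = y, ν·∂C/∂y = −x, ν·∂C/∂z = 0 at every point (x,y,z) ∈ ℝ³. -/

import Mathlib

open scoped RealInnerProductSpace

noncomputable section

abbrev E3 := EuclideanSpace ℝ (Fin 3)

/-- The cross product on `EuclideanSpace ℝ (Fin 3)`. -/
noncomputable def cross3 (a b : E3) : E3 :=
  (WithLp.equiv 2 (Fin 3 → ℝ)).symm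
    (crossProduct (WithLp.equiv 2 (Fin 3 → ℝ) a) (WithLp.equiv 2 (Fin 3 → ℝ) b))

noncomputable def L3 : (Fin 3 → ℝ) ≃L[ℝ] E3 :=
  (PiLp.continuousLinearEquiv 2 ℝ (fun _ : Fin 3 => ℝ)).symm

lemma L3_apply (v : Fin 3 → ℝ) (i : Fin 3) : (L3 v : E3) i = v i := rfl

lemma L3_decomp (v : Fin 3 → ℝ) :
    (L3 v : E3) = v 0 • EuclideanSpace.single 0 (1:ℝ) + v 1 • EuclideanSpace.single 1 (1:ℝ)
      + v 2 • EuclideanSpace.single 2 (1:ℝ) := by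
  ext i
  fin_cases i <;>
    simp [L3_apply, EuclideanSpace.single_apply]

/-- The 1-form `ω = y dx − x dy` on `ℝ³` admits no global
representation `ω = ν dC` with `ν` smooth and nowhere vanishing and `C` smooth:
there are no smooth `ν, C : ℝ³ → ℝ` with `ν(p) ≠ 0` everywhere such that
`ν·∂C/∂x = y`, `ν·∂C/∂y = −x` and `ν·∂C/∂z = 0` at every point `(x,y,z)`. -/
theorem stmt_19 :
    ¬ ∃ (ν C : E3 → ℝ), ContDiff ℝ (⊤ : ℕ∞) ν ∧ ContDiff ℝ (⊤ : ℕ∞) C ∧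
      (∀ p : E3, ν p ≠ 0) ∧
      (∀ p : E3,
        ν p * fderiv ℝ C p (EuclideanSpace.single 0 (1:ℝ)) = p 1 ∧
        ν p * fderiv ℝ C p (EuclideanSpace.single 1 (1:ℝ)) = -(p 0) ∧
        ν p * fderiv ℝ C p (EuclideanSpace.single 2 (1:ℝ)) = 0) := by
  rintro ⟨ν, C, hν, hC, hν0, hall⟩
  -- the loop
  set γ : ℝ → E3 := fun θ => L3 ![Real.cos θ, Real.sin θ, 0] with hγ
  have hγ0 : ∀ θ, (γ θ) 0 = Real.cos θ := by
    intro θ; simp [hγ, L3_apply]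
  have hγ1 : ∀ θ, (γ θ) 1 = Real.sin θ := by
    intro θ; simp [hγ, L3_apply]
  -- derivative of the loop
  have hγ' : ∀ θ, HasDerivAt γ (L3 ![-Real.sin θ, Real.cos θ, 0]) θ := by
    intro θ
    have hg : HasDerivAt (fun θ => (![Real.cos θ, Real.sin θ, 0] : Fin 3 → ℝ))
        ![-Real.sin θ, Real.cos θ, 0] θ := by
      rw [hasDerivAt_pi]
      intro i
      fin_cases i
      · simpa using Real.hasDerivAt_cos θ
      · simpa using Real.hasDerivAt_sin θ
      · simpa using hasDerivAt_const θ (0:ℝ)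
    exact ((L3 : (Fin 3 → ℝ) →L[ℝ] E3).hasFDerivAt.comp_hasDerivAt θ hg)
  -- f = C ∘ γ
  set f : ℝ → ℝ := fun θ => C (γ θ) with hf
  have hCdiff : Differentiable ℝ C := hC.differentiable (by simp)
  have hf' : ∀ θ, HasDerivAt f (fderiv ℝ C (γ θ) (L3 ![-Real.sin θ, Real.cos θ, 0])) θ := by
    intro θ
    exact ((hCdiff (γ θ)).hasFDerivAt).comp_hasDerivAt θ (hγ' θ)
  -- the derivative value times ν is -1
  have key : ∀ θ, ν (γ θ) * fderiv ℝ C (γ θ) (L3 ![-Real.sin θ, Real.cos θ, 0]) = -1 := by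
    intro θ
    obtain ⟨h0, h1, h2⟩ := hall (γ θ)
    rw [L3_decomp]
    simp only [map_add, map_smul, Matrix.cons_val_zero, Matrix.cons_val_one, Matrix.head_cons,
      Matrix.cons_val_two, Matrix.tail_cons, smul_eq_mul]
    have := Real.sin_sq_add_cos_sq θ
    rw [hγ0, hγ1] at *
    linear_combination (-Real.sin θ) * h0 + Real.cos θ * h1 - this
  -- Rolle
  have hper : f 0 = f (2 * Real.pi) := by
    simp [hf, hγ, Real.cos_two_pi, Real.sin_two_pi]
  have h2pi : (0:ℝ) < 2 * Real.pi := by positivity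
  obtain ⟨c, _, hc⟩ := exists_hasDerivAt_eq_zero h2pi
    (fun θ _ => ((hf' θ).continuousAt).continuousWithinAt) hper
    (fun θ _ => hf' θ)
  have := key c
  rw [hc, mul_zero] at this
  norm_num at this
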